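/- Consider the hypersurface X = {xy − zw = 0} ⊂ ℂ⁴ with coordinates (x,y,z,w) (the 2×2 matrices of rank ≤ 1) and the map g(x,y,z,w) = (z − w, y − x^k). The stratified critical locus of g on the rank-1 stratum V¹ = X ∖ {0}, intersected with the central fiber g^{-1}(0), consists only of the origin; i.e. g restricted to X has an isolated singularity in the stratified sense at 0. -/
import Mathlib


/-- On the hypersurface `X = {xy − zw = 0} ⊂ ℂ⁴` (the 2×2 matrices
of rank ≤ 1) with the map `g(x,y,z,w) = (z − w, y − x^k)`, the stratified critical
locus of `g` on the stratum `V¹ = X ∖ {0}` — cut out by `w + z = 0` and `y + k·x^k = 0`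
together with `xy − zw = 0` — meets the central fiber `g⁻¹(0)` only at the origin:
the common zero locus of `xy − zw`, `w + z`, `y + k·x^k`, `z − w`, `y − x^k` is `{0}`.
I.e. `g` restricted to `X` has an isolated singularity in the stratified sense at `0`. -/
theorem isolated_stratified_singularity (k : ℕ) (hk : 1 ≤ k) :
    {p : ℂ × ℂ × ℂ × ℂ |
        p.1 * p.2.1 - p.2.2.1 * p.2.2.2 = 0 ∧
        p.2.2.2 + p.2.2.1 = 0 ∧
        p.2.1 + (k : ℂ) * p.1 ^ k = 0 ∧
        p.2.2.1 - p.2.2.2 = 0 ∧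
        p.2.1 - p.1 ^ k = 0}
      = {0} := by
  have hk0 : k ≠ 0 := Nat.one_le_iff_ne_zero.mp hk
  ext ⟨x, y, z, w⟩
  simp only [Set.mem_setOf_eq, Set.mem_singleton_iff, Prod.ext_iff, Prod.fst_zero,
    Prod.snd_zero]
  constructor
  · rintro ⟨h1, h2, h3, h4, h5⟩
    have hw : w = 0 := by linear_combination (h2 - h4) / 2
    have hzz : z = 0 := by linear_combination (h2 + h4) / 2
    have hx : ((k : ℂ) + 1) * x ^ k = 0 := by linear_combination h3 - h5
    have hk1 : ((k : ℂ) + 1) ≠ 0 := Nat.cast_add_one_ne_zero k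
    have hxk : x ^ k = 0 := (mul_eq_zero.1 hx).resolve_left hk1
    have hx0 : x = 0 := (pow_eq_zero_iff hk0).mp hxk
    have hy : y = 0 := by rw [hx0, zero_pow hk0] at h5; linear_combination h5
    exact ⟨hx0, hy, hzz, hw⟩
  · rintro ⟨hx, hy, hz, hw⟩
    subst hx; subst hy; subst hz; subst hw
    norm_num [zero_pow hk0]
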